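/- Let M be a real symmetric positive semidefinite n×n matrix with eigenvalues σ₁ ≥ … ≥ σₙ ≥ 0, and let U be an n×k matrix with mutually orthogonal unit columns. Then det(UᵀMU) ≤ σ₁ σ₂ ⋯ σ_k. -/

import Mathlib

open Matrix Equiv Finset

/-- The eigenvalues of a Hermitian matrix listed in nonincreasing order. -/
noncomputable def eigDesc {n : ℕ} {M : Matrix (Fin n) (Fin n) ℝ} (hM : M.IsHermitian) :
    Fin n → ℝ :=
  fun i => (hM.eigenvalues ∘ Tuple.sort hM.eigenvalues) i.rev

lemma cb_aux {n k : ℕ} (d : Fin n → ℝ) (W : Matrix (Fin n) (Fin k) ℝ)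
    {p : Fin k → Fin n} (H : ¬Function.Injective p) :
    ∑ σ : Equiv.Perm (Fin k),
      ((Equiv.Perm.sign σ : ℤ) : ℝ) * ∏ b, W (p b) (σ b) * (d (p b) * W (p b) b) = 0 := by
  obtain ⟨i, j, hpij, hij⟩ : ∃ i j, p i = p j ∧ i ≠ j := by
    rw [Function.Injective] at H; push_neg at H; exact H
  refine Finset.sum_involution (fun σ _ => σ * Equiv.swap i j)
    (fun σ _ => ?_)
    (fun σ _ _ => (not_congr Equiv.mul_swap_eq_iff).mpr hij)
    (fun _ _ => Finset.mem_univ _)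
    (fun σ _ => Equiv.mul_swap_involutive i j σ)
  have key : ∀ τ : Equiv.Perm (Fin k),
      (∏ b, W (p b) (τ b) * (d (p b) * W (p b) b))
        = (∏ b, W (p b) (τ b)) * ∏ b, d (p b) * W (p b) b := by
    intro τ; rw [Finset.prod_mul_distrib]
  have hswap : (∏ b, W (p b) ((σ * Equiv.swap i j) b)) = ∏ b, W (p b) (σ b) :=
    Fintype.prod_equiv (Equiv.swap i j) _ _ (by
      intro b
      simp only [Equiv.Perm.coe_mul, Function.comp_apply]
      rw [Equiv.apply_swap_eq_self hpij])
  rw [key, key, hswap, Equiv.Perm.sign_mul, Equiv.Perm.sign_swap hij]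
  push_cast
  ring

lemma cb_bij {n k : ℕ} (F : (Fin k → Fin n) → ℝ) :
    ∑ p ∈ Finset.univ.filter (fun p : Fin k → Fin n => Function.Injective p), F p
    = ∑ Sτ : {S : Finset (Fin n) // S.card = k} × Equiv.Perm (Fin k),
        F (fun b => Sτ.1.1.orderEmbOfFin Sτ.1.2 (Sτ.2 b)) := by
  refine (Finset.sum_bij (fun Sτ _ => fun b => Sτ.1.1.orderEmbOfFin Sτ.1.2 (Sτ.2 b))
    ?_ ?_ ?_ ?_).symm
  · rintro ⟨⟨S, hS⟩, τ⟩ -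
    simp only [Finset.mem_filter, Finset.mem_univ, true_and]
    exact (S.orderEmbOfFin hS).injective.comp τ.injective
  · rintro ⟨⟨S, hS⟩, τ⟩ h1 ⟨⟨S', hS'⟩, τ'⟩ h2 h
    have hSS' : S = S' := by
      apply Finset.coe_injective
      rw [← Finset.range_orderEmbOfFin S hS, ← Finset.range_orderEmbOfFin S' hS']
      rw [← τ.surjective.range_comp (S.orderEmbOfFin hS),
        ← τ'.surjective.range_comp (S'.orderEmbOfFin hS')]
      exact congrArg Set.range h
    subst hSS'
    have hτ : τ = τ' := by
      ext b
      exact congrArg Fin.val ((S.orderEmbOfFin hS).injective (congrFun h b))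
    rw [hτ]
  · intro p hp
    rw [Finset.mem_filter] at hp
    have hpinj : Function.Injective p := hp.2
    have hcard : (Finset.univ.image p).card = k := by
      rw [Finset.card_image_of_injective _ hpinj, Finset.card_univ, Fintype.card_fin]
    set S : Finset (Fin n) := Finset.univ.image p with hSdef
    have hmem : ∀ b, p b ∈ S := fun b => Finset.mem_image_of_mem p (Finset.mem_univ b)
    have τ0 : Fin k → Fin k := fun b => (S.orderIsoOfFin hcard).symm ⟨p b, hmem b⟩
    have hinj0 : Function.Injective (fun b => (S.orderIsoOfFin hcard).symm ⟨p b, hmem b⟩) := by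
      intro a b hab
      apply hpinj
      have := (S.orderIsoOfFin hcard).symm.injective hab
      exact congrArg Subtype.val this
    refine ⟨⟨⟨S, hcard⟩, Equiv.ofBijective _ ((Finite.injective_iff_bijective).mp hinj0)⟩,
      Finset.mem_univ _, ?_⟩
    funext b
    simp only [Equiv.ofBijective_apply]
    rw [← Finset.coe_orderIsoOfFin_apply S hcard]
    simp
  · intros; rfl

lemma cb_stepD {n k : ℕ} (d : Fin n → ℝ) (W : Matrix (Fin n) (Fin k) ℝ) (e : Fin k → Fin n) :
    ∑ τ : Equiv.Perm (Fin k), ∑ σ : Equiv.Perm (Fin k),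
      ((Equiv.Perm.sign σ : ℤ) : ℝ) * ∏ b, W (e (τ b)) (σ b) * (d (e (τ b)) * W (e (τ b)) b)
    = (∏ b, d (e b)) * det (W.submatrix e id) ^ 2 := by
  set A : Matrix (Fin k) (Fin k) ℝ := W.submatrix e id with hA
  have key : ∀ τ σ : Equiv.Perm (Fin k),
      (∏ b, W (e (τ b)) (σ b) * (d (e (τ b)) * W (e (τ b)) b))
      = (∏ b, A (τ b) (σ b)) * (∏ b, d (e b)) * (∏ b, A (τ b) b) := by
    intro τ σ
    rw [show (∏ b, W (e (τ b)) (σ b) * (d (e (τ b)) * W (e (τ b)) b))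
        = (∏ b, W (e (τ b)) (σ b)) * ((∏ b, d (e (τ b))) * (∏ b, W (e (τ b)) b)) by
      rw [← Finset.prod_mul_distrib, ← Finset.prod_mul_distrib]]
    rw [Equiv.prod_comp τ (fun b => d (e b))]
    simp only [hA, Matrix.submatrix_apply, id]
    ring
  calc ∑ τ : Equiv.Perm (Fin k), ∑ σ : Equiv.Perm (Fin k),
      ((Equiv.Perm.sign σ : ℤ) : ℝ) * ∏ b, W (e (τ b)) (σ b) * (d (e (τ b)) * W (e (τ b)) b)
      = ∑ τ : Equiv.Perm (Fin k), ∑ ρ : Equiv.Perm (Fin k),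
        (((Equiv.Perm.sign ρ : ℤ) : ℝ) * ∏ c, A c (ρ c)) *
        ((((Equiv.Perm.sign τ : ℤ) : ℝ) * ∏ b, A (τ b) b) * (∏ b, d (e b))) := by
        refine Finset.sum_congr rfl fun τ _ => ?_
        refine Fintype.sum_equiv (Equiv.mulRight τ⁻¹) _ _ fun σ => ?_
        rw [key]
        have h1 : (∏ c, A c ((σ * τ⁻¹) c)) = ∏ b, A (τ b) (σ b) := by
          rw [← Equiv.prod_comp τ (fun c => A c ((σ * τ⁻¹) c))]
          refine Finset.prod_congr rfl fun b _ => by simp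
        rw [Equiv.coe_mulRight, h1, Equiv.Perm.sign_mul, Equiv.Perm.sign_inv]
        rcases Int.units_eq_one_or (Equiv.Perm.sign τ) with h | h <;>
          rcases Int.units_eq_one_or (Equiv.Perm.sign σ) with h' | h' <;>
          simp [h, h'] <;> ring
    _ = (∑ ρ : Equiv.Perm (Fin k), ((Equiv.Perm.sign ρ : ℤ) : ℝ) * ∏ c, A c (ρ c)) *
        ((∑ τ : Equiv.Perm (Fin k), ((Equiv.Perm.sign τ : ℤ) : ℝ) * ∏ b, A (τ b) b) *
          (∏ b, d (e b))) := by
        simp only [← Finset.sum_mul, ← Finset.mul_sum]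
    _ = (∏ b, d (e b)) * det A ^ 2 := by
        have h2 : (∑ τ : Equiv.Perm (Fin k), ((Equiv.Perm.sign τ : ℤ) : ℝ) * ∏ b, A (τ b) b)
            = det A := (det_apply' A).symm
        have h3 : (∑ ρ : Equiv.Perm (Fin k), ((Equiv.Perm.sign ρ : ℤ) : ℝ) * ∏ c, A c (ρ c))
            = det A := by
          rw [← det_transpose A, det_apply' Aᵀ]
          rfl
        rw [h2, h3]; ring

lemma prod_orderEmbOfFin' {n k : ℕ} (S : Finset (Fin n)) (hS : S.card = k) (d : Fin n → ℝ) :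
    (∏ b : Fin k, d (S.orderEmbOfFin hS b)) = ∏ i ∈ S, d i := by
  have him : Finset.univ.image (S.orderEmbOfFin hS) = S := by
    apply Finset.coe_injective
    rw [Finset.coe_image, Finset.coe_univ, Set.image_univ, Finset.range_orderEmbOfFin]
  conv_rhs => rw [← him]
  rw [Finset.prod_image (fun a _ b _ hab => (S.orderEmbOfFin hS).injective hab)]

lemma cb_diag {n k : ℕ} (d : Fin n → ℝ) (W : Matrix (Fin n) (Fin k) ℝ) :
    det (Wᵀ * Matrix.diagonal d * W) =
      ∑ S : {S : Finset (Fin n) // S.card = k},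
        (∏ i ∈ S.1, d i) * det (W.submatrix (S.1.orderEmbOfFin S.2) id) ^ 2 := by
  have step1 : det (Wᵀ * Matrix.diagonal d * W) =
      ∑ p : Fin k → Fin n, ∑ σ : Equiv.Perm (Fin k),
        ((Equiv.Perm.sign σ : ℤ) : ℝ) * ∏ b, W (p b) (σ b) * (d (p b) * W (p b) b) := by
    have h : Wᵀ * Matrix.diagonal d * W = Wᵀ * Matrix.of (fun i b => d i * W i b) := by
      rw [Matrix.mul_assoc]
      congr 1
      ext i b
      simp [Matrix.diagonal_mul]
    rw [h]
    simp only [det_apply', mul_apply, transpose_apply, of_apply, prod_univ_sum, mul_sum,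
      Fintype.piFinset_univ]
    rw [Finset.sum_comm]
  rw [step1]
  have step2 : (∑ p : Fin k → Fin n, ∑ σ : Equiv.Perm (Fin k),
        ((Equiv.Perm.sign σ : ℤ) : ℝ) * ∏ b, W (p b) (σ b) * (d (p b) * W (p b) b))
      = ∑ p ∈ Finset.univ.filter (fun p : Fin k → Fin n => Function.Injective p),
          ∑ σ : Equiv.Perm (Fin k),
            ((Equiv.Perm.sign σ : ℤ) : ℝ) * ∏ b, W (p b) (σ b) * (d (p b) * W (p b) b) := by
    refine (Finset.sum_subset (Finset.filter_subset _ _) fun p _ hp => ?_).symm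
    have : ¬Function.Injective p := by simpa using hp
    exact cb_aux d W this
  rw [step2, cb_bij]
  rw [Fintype.sum_prod_type]
  refine Finset.sum_congr rfl fun S _ => ?_
  rw [← prod_orderEmbOfFin' S.1 S.2 d]
  exact cb_stepD d W (S.1.orderEmbOfFin S.2)

lemma fin_le_strictMono {k n : ℕ} (f : Fin k → Fin n) (hf : StrictMono f) (j : Fin k) :
    (j : ℕ) ≤ (f j : ℕ) := by
  suffices H : ∀ m (j : Fin k), (j : ℕ) = m → (j : ℕ) ≤ (f j : ℕ) from H _ j rfl
  intro m
  induction m with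
  | zero => intro j hm; omega
  | succ m ih =>
    intro j hm
    have hmk : m < k := by omega
    have hlt : (⟨m, hmk⟩ : Fin k) < j := by
      rw [Fin.lt_def]; simp only [Fin.val_mk]; omega
    have h1 : f ⟨m, hmk⟩ < f j := hf hlt
    have h2 := ih ⟨m, hmk⟩ rfl
    rw [Fin.lt_def] at h1
    simp only [Fin.val_mk] at h1 h2
    omega

lemma lemA {n k : ℕ} (hkn : k ≤ n) (d : Fin n → ℝ) (hd : Antitone d) (hd0 : ∀ i, 0 ≤ d i)
    (W : Matrix (Fin n) (Fin k) ℝ) (hW : Wᵀ * W = 1) :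
    det (Wᵀ * Matrix.diagonal d * W) ≤ ∏ i : Fin k, d (Fin.castLE hkn i) := by
  rw [cb_diag]
  have hsq : (∑ S : {S : Finset (Fin n) // S.card = k},
      det (W.submatrix (S.1.orderEmbOfFin S.2) id) ^ 2) = 1 := by
    have h1 := cb_diag (fun _ => (1 : ℝ)) W
    simp only [Matrix.diagonal_one, Matrix.mul_one, hW, det_one, Finset.prod_const_one,
      one_mul] at h1
    exact h1.symm
  calc (∑ S : {S : Finset (Fin n) // S.card = k},
        (∏ i ∈ S.1, d i) * det (W.submatrix (S.1.orderEmbOfFin S.2) id) ^ 2)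
      ≤ ∑ S : {S : Finset (Fin n) // S.card = k},
        (∏ i : Fin k, d (Fin.castLE hkn i)) * det (W.submatrix (S.1.orderEmbOfFin S.2) id) ^ 2 := by
        refine Finset.sum_le_sum fun S _ => ?_
        refine mul_le_mul_of_nonneg_right ?_ (sq_nonneg _)
        rw [← prod_orderEmbOfFin' S.1 S.2 d]
        refine Finset.prod_le_prod (fun j _ => hd0 _) fun j _ => ?_
        refine hd ?_
        have := fin_le_strictMono _ (S.1.orderEmbOfFin S.2).strictMono j
        exact Fin.le_def.mpr (by simpa using this)
    _ = ∏ i : Fin k, d (Fin.castLE hkn i) := by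
        rw [← Finset.mul_sum, hsq, mul_one]

lemma perm_conj {n k : ℕ} (π : Equiv.Perm (Fin n)) (g : Fin n → ℝ)
    (Y : Matrix (Fin n) (Fin k) ℝ) :
    (Y.submatrix π id)ᵀ * Matrix.diagonal (fun i => g (π i)) * (Y.submatrix π id)
      = Yᵀ * Matrix.diagonal g * Y := by
  ext a b
  rw [Matrix.mul_assoc, Matrix.mul_assoc]
  simp only [mul_apply, transpose_apply, submatrix_apply, id, Matrix.diagonal_apply, ite_mul,
    zero_mul, Finset.sum_ite_eq, Finset.mem_univ, if_true]
  exact Fintype.sum_equiv π _ _ fun i => by simp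

theorem det_conj_le_prod_eigs {n k : ℕ} (hkn : k ≤ n)
    (M : Matrix (Fin n) (Fin n) ℝ) (hM : M.PosSemidef)
    (U : Matrix (Fin n) (Fin k) ℝ) (hU : Uᵀ * U = 1) :
    (Uᵀ * M * U).det ≤ ∏ i : Fin k, eigDesc hM.1 (Fin.castLE hkn i) := by
  set ev := hM.1.eigenvalues with hev
  set V : Matrix (Fin n) (Fin n) ℝ := (hM.1.eigenvectorUnitary : Matrix (Fin n) (Fin n) ℝ)
    with hVdef
  have hstar : star V = Vᵀ := by
    rw [Matrix.star_eq_conjTranspose]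
    ext i j
    simp [Matrix.conjTranspose_apply]
  have hsp : M = V * Matrix.diagonal ev * Vᵀ := by
    have := hM.1.spectral_theorem
    rw [Unitary.conjStarAlgAut_apply] at this
    rw [hstar] at this
    exact this
  have hVV : V * Vᵀ = 1 := by
    rw [← hstar]
    exact Matrix.mem_unitaryGroup_iff.mp (hM.1.eigenvectorUnitary).2
  set π : Equiv.Perm (Fin n) := Fin.revPerm.trans (Tuple.sort ev) with hπ
  set d : Fin n → ℝ := eigDesc hM.1 with hd
  have hdev : d = fun i => ev (π i) := rfl
  set X : Matrix (Fin n) (Fin k) ℝ := Vᵀ * U with hX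
  set W : Matrix (Fin n) (Fin k) ℝ := X.submatrix π id with hW
  have hXX : Xᵀ * X = 1 := by
    rw [hX, Matrix.transpose_mul, Matrix.transpose_transpose, Matrix.mul_assoc,
      ← Matrix.mul_assoc V, hVV, Matrix.one_mul, hU]
  have hWW : Wᵀ * W = 1 := by
    have h := perm_conj π (fun _ => (1 : ℝ)) X
    simp only [Matrix.diagonal_one, Matrix.mul_one] at h
    rw [hW, h, hXX]
  have hconj : Uᵀ * M * U = Wᵀ * Matrix.diagonal d * W := by
    rw [hW, hdev, perm_conj π ev X, hX, Matrix.transpose_mul, Matrix.transpose_transpose, hsp]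
    simp only [Matrix.mul_assoc]
  have hanti : Antitone d := by
    intro i j hij
    have hm := Tuple.monotone_sort ev
    exact hm (Fin.rev_le_rev.mpr hij)
  have hnn : ∀ i, 0 ≤ d i := fun i => hM.eigenvalues_nonneg _
  rw [hconj]
  exact lemA hkn d hanti hnn W hWW
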